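/- Summation estimate for harmonic recombination rates: there is a constant C independent of L, ε, and ℓ₀ such that ∑_{A ⊆ [L]∖{ℓ₀}, 1≤|A|≤2} L^{-|A|} (1/(ρ r_{{ℓ₀}∪A} ε) + L/(ρ r_{{ℓ₀}∪A}) + √(ln ρ / (ρ r_{{ℓ₀}∪A}))) ≤ C((1/(ρε) + L/ρ)(1/r*_{ℓ₀} + 1/r**) + √(ln ρ/(ρ r*_{ℓ₀})) + √(ln ρ/(ρ r**))), assuming ρ ≥ e. -/

import Mathlib

open Finset

/-- Reciprocal harmonic recombination rate at `ℓ₀`: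
`1/r*_{ℓ₀} = (1/(L-1)) ∑_{ℓ₁ ≠ ℓ₀} 1/r_{{ℓ₀,ℓ₁}}`. -/
noncomputable def rstarInv {L : ℕ} (r : Fin L → Fin L → ℝ) (ℓ₀ : Fin L) : ℝ :=
  (1 / ((L : ℝ) - 1)) * ∑ ℓ₁ ∈ univ.erase ℓ₀, (r ℓ₀ ℓ₁)⁻¹

/-- Reciprocal average harmonic recombination rate:
`1/r** = (1/L) ∑_{ℓ₀} 1/r*_{ℓ₀}`. -/
noncomputable def rssInv {L : ℕ} (r : Fin L → Fin L → ℝ) : ℝ :=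
  (1 / (L : ℝ)) * ∑ ℓ₀ : Fin L, rstarInv r ℓ₀

set_option maxHeartbeats 1000000

private lemma sqrt_add_le3 {a b : ℝ} (ha : 0 ≤ a) (hb : 0 ≤ b) :
    Real.sqrt (a + b) ≤ Real.sqrt a + Real.sqrt b := by
  have h : a + b ≤ (Real.sqrt a + Real.sqrt b) ^ 2 := by
    nlinarith [Real.sq_sqrt ha, Real.sq_sqrt hb, Real.sqrt_nonneg a, Real.sqrt_nonneg b,
      mul_nonneg (Real.sqrt_nonneg a) (Real.sqrt_nonneg b)]
  calc Real.sqrt (a+b) ≤ Real.sqrt ((Real.sqrt a + Real.sqrt b)^2) := Real.sqrt_le_sqrt h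
    _ = _ := Real.sqrt_sq (by positivity)

private lemma sum_sqrt_le_sqrt {ι : Type*} (t : Finset ι) (f : ι → ℝ) (hf : ∀ i ∈ t, 0 ≤ f i) :
    ∑ i ∈ t, Real.sqrt (f i) ≤ Real.sqrt ((t.card : ℝ) * ∑ i ∈ t, f i) := by
  rw [Real.le_sqrt (Finset.sum_nonneg fun i _ => Real.sqrt_nonneg _) (mul_nonneg (Nat.cast_nonneg _) (Finset.sum_nonneg hf))]
  calc (∑ i ∈ t, Real.sqrt (f i)) ^ 2 ≤ (t.card : ℝ) * ∑ i ∈ t, Real.sqrt (f i) ^ 2 :=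
        sq_sum_le_card_mul_sum_sq
    _ = (t.card : ℝ) * ∑ i ∈ t, f i := by
        congr 1; exact Finset.sum_congr rfl fun i hi => Real.sq_sqrt (hf i hi)

private lemma sum_offDiag_eq {ι : Type*} [DecidableEq ι] (s : Finset ι) (f : ι → ι → ℝ) :
    ∑ p ∈ s.offDiag, f p.1 p.2 = ∑ a ∈ s, ∑ b ∈ s.erase a, f a b := by
  rw [show s.offDiag = (s ×ˢ s).filter (fun p => p.1 ≠ p.2) by ext p; simp [Finset.mem_offDiag, and_assoc],
    Finset.sum_filter, Finset.sum_product]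
  refine Finset.sum_congr rfl fun a _ => ?_
  rw [← Finset.filter_ne' s a, Finset.sum_filter]
  exact Finset.sum_congr rfl fun b _ => by simp [ne_comm]



/-- Summation estimate for harmonic recombination rates: there is a constant
`C` independent of `L`, `ε`, `ρ`, `r` and `ℓ₀` such that, for `ρ ≥ e`,
`∑_{A⊆[L]∖{ℓ₀}, 1≤#A≤2} L^{-#A}(1/(ρ r_{{ℓ₀}∪A} ε) + L/(ρ r_{{ℓ₀}∪A})
  + √(ln ρ/(ρ r_{{ℓ₀}∪A})))
 ≤ C((1/(ρε) + L/ρ)(1/r*_{ℓ₀} + 1/r**) + √(ln ρ/(ρ r*_{ℓ₀})) + √(ln ρ/(ρ r**)))`,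
where `r_A` is the minimum pairwise rate over distinct pairs in `A`. -/
theorem harmonic_recombination_sum_estimate :
    ∃ C : ℝ, 0 < C ∧
      ∀ (L : ℕ), 2 ≤ L →
      ∀ r : Fin L → Fin L → ℝ,
        (∀ ℓ₁ ℓ₂, ℓ₁ ≠ ℓ₂ → 0 < r ℓ₁ ℓ₂) →
        (∀ ℓ₁ ℓ₂, r ℓ₁ ℓ₂ = r ℓ₂ ℓ₁) →
      ∀ rS : Finset (Fin L) → ℝ,
        (∀ s : Finset (Fin L), 2 ≤ s.card →
          ((∃ ℓ₁ ∈ s, ∃ ℓ₂ ∈ s, ℓ₁ ≠ ℓ₂ ∧ rS s = r ℓ₁ ℓ₂) ∧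
            ∀ ℓ₁ ∈ s, ∀ ℓ₂ ∈ s, ℓ₁ ≠ ℓ₂ → rS s ≤ r ℓ₁ ℓ₂)) →
      ∀ ρ ε : ℝ, Real.exp 1 ≤ ρ → 0 < ε →
      ∀ ℓ₀ : Fin L,
        (∑ A ∈ (univ.erase ℓ₀).powerset.filter
              (fun A => 1 ≤ A.card ∧ A.card ≤ 2),
            (1 / (L : ℝ) ^ A.card) *
              (1 / (ρ * rS (insert ℓ₀ A) * ε)
                + (L : ℝ) / (ρ * rS (insert ℓ₀ A))
                + Real.sqrt (Real.log ρ / (ρ * rS (insert ℓ₀ A)))))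
          ≤ C * ((1 / (ρ * ε) + (L : ℝ) / ρ) * (rstarInv r ℓ₀ + rssInv r)
              + Real.sqrt (Real.log ρ * rstarInv r ℓ₀ / ρ)
              + Real.sqrt (Real.log ρ * rssInv r / ρ)) := by
  refine ⟨3, by norm_num, ?_⟩
  intro L hL r hr hsym rS hrS ρ ε hρe hε ℓ₀
  have hρ : 0 < ρ := lt_of_lt_of_le (Real.exp_pos 1) hρe
  have hρ1 : 1 ≤ ρ := le_trans (by nlinarith [Real.add_one_le_exp (1:ℝ)]) hρe
  have hlog : 0 ≤ Real.log ρ := Real.log_nonneg hρ1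
  have hLR : (2:ℝ) ≤ (L:ℝ) := by exact_mod_cast hL
  have hLpos : (0:ℝ) < L := by linarith
  set s : Finset (Fin L) := univ.erase ℓ₀ with hs_def
  have hscard : s.card = L - 1 := by
    rw [hs_def, Finset.card_erase_of_mem (mem_univ _), Finset.card_univ, Fintype.card_fin]
  have hscardR : (s.card : ℝ) ≤ (L:ℝ) := by exact_mod_cast Nat.cast_le.mpr (hscard ▸ Nat.sub_le L 1)
  set c := Real.log ρ / ρ with hc_def
  have hc : 0 ≤ c := by positivity
  set X := 1/(ρ*ε) + (L:ℝ)/ρ with hX_def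
  have hX : 0 ≤ X := by positivity
  set u := rstarInv r ℓ₀ with hu_def
  set v := rssInv r with hv_def
  -- positivity of inverses
  have hinv : ∀ a b : Fin L, a ≠ b → 0 < (r a b)⁻¹ := fun a b hab => inv_pos.mpr (hr a b hab)
  -- star sums
  have hL1ne : ((L:ℝ) - 1) ≠ 0 := by linarith
  have hsum_star : ∀ ℓ : Fin L, ∑ ℓ₁ ∈ univ.erase ℓ, (r ℓ ℓ₁)⁻¹ = ((L:ℝ) - 1) * rstarInv r ℓ := by
    intro ℓ
    rw [rstarInv, ← mul_assoc, mul_one_div, div_self hL1ne, one_mul]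
  have hstar_nonneg : ∀ ℓ : Fin L, 0 ≤ rstarInv r ℓ := by
    intro ℓ
    apply mul_nonneg (one_div_nonneg.mpr (by linarith))
    exact Finset.sum_nonneg fun ℓ₁ h =>
      (hinv ℓ ℓ₁ (Ne.symm (Finset.mem_erase.mp h).1)).le
  have hu : 0 ≤ u := hstar_nonneg ℓ₀
  have hv : 0 ≤ v := by
    rw [hv_def, rssInv]
    exact mul_nonneg (by positivity) (Finset.sum_nonneg fun ℓ _ => hstar_nonneg ℓ)
  have hsum_ss : ∑ ℓ : Fin L, rstarInv r ℓ = (L:ℝ) * v := by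
    rw [hv_def, rssInv, ← mul_assoc, mul_one_div, div_self (ne_of_gt hLpos), one_mul]
  -- facts about rS on pairs and triples
  have h_two : ∀ a : Fin L, a ≠ ℓ₀ →
      0 < rS {ℓ₀, a} ∧ (rS {ℓ₀, a})⁻¹ ≤ (r ℓ₀ a)⁻¹ := by
    intro a ha
    have hcard : 2 ≤ ({ℓ₀, a} : Finset (Fin L)).card := by
      rw [Finset.card_pair (Ne.symm ha)]
    obtain ⟨⟨x, hx, y, hy, hxy, hEq⟩, -⟩ := hrS {ℓ₀, a} hcard
    simp only [Finset.mem_insert, Finset.mem_singleton] at hx hy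
    have : rS {ℓ₀, a} = r ℓ₀ a := by
      rcases hx with rfl | rfl <;> rcases hy with rfl | rfl
      · exact absurd rfl hxy
      · exact hEq
      · exact hEq.trans (hsym _ _)
      · exact absurd rfl hxy
    rw [this]
    exact ⟨hr ℓ₀ a (Ne.symm ha), le_refl _⟩
  have h_three : ∀ a b : Fin L, a ≠ ℓ₀ → b ≠ ℓ₀ → a ≠ b →
      0 < rS {ℓ₀, a, b} ∧
        (rS {ℓ₀, a, b})⁻¹ ≤ (r ℓ₀ a)⁻¹ + (r ℓ₀ b)⁻¹ + (r a b)⁻¹ := by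
    intro a b ha hb hab
    have hcard : 2 ≤ ({ℓ₀, a, b} : Finset (Fin L)).card := by
      have h1 : ({ℓ₀, a} : Finset (Fin L)) ⊆ {ℓ₀, a, b} := by
        intro x hx
        simp only [Finset.mem_insert, Finset.mem_singleton] at hx ⊢
        tauto
      calc 2 = ({ℓ₀, a} : Finset (Fin L)).card := (Finset.card_pair (Ne.symm ha)).symm
        _ ≤ _ := Finset.card_le_card h1
    obtain ⟨⟨x, hx, y, hy, hxy, hEq⟩, -⟩ := hrS {ℓ₀, a, b} hcard
    simp only [Finset.mem_insert, Finset.mem_singleton] at hx hy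
    have hpos : 0 < rS {ℓ₀, a, b} := by
      rw [hEq]; exact hr x y hxy
    refine ⟨hpos, ?_⟩
    have e1 := (hinv ℓ₀ a (Ne.symm ha)).le
    have e2 := (hinv ℓ₀ b (Ne.symm hb)).le
    have e3 := (hinv a b hab).le
    have key : (rS {ℓ₀, a, b})⁻¹ = (r ℓ₀ a)⁻¹ ∨ (rS {ℓ₀, a, b})⁻¹ = (r ℓ₀ b)⁻¹ ∨
        (rS {ℓ₀, a, b})⁻¹ = (r a b)⁻¹ := by
      rcases hx with rfl | rfl | rfl <;> rcases hy with rfl | rfl | rfl <;>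
        first
          | exact absurd rfl hxy
          | (rw [hEq]; tauto)
          | (rw [hEq, hsym]; tauto)
    rcases key with h | h | h <;> rw [h] <;> linarith
  -- the summand
  set f : Finset (Fin L) → ℝ := fun A =>
    (1 / (L : ℝ) ^ A.card) *
      (1 / (ρ * rS (insert ℓ₀ A) * ε) + (L : ℝ) / (ρ * rS (insert ℓ₀ A))
        + Real.sqrt (Real.log ρ / (ρ * rS (insert ℓ₀ A)))) with hf_def
  -- splitting
  have hsplit : s.powerset.filter (fun A => 1 ≤ A.card ∧ A.card ≤ 2)
      = (s.powerset.filter (fun A => A.card = 1)) ∪ (s.powerset.filter (fun A => A.card = 2)) := by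
    ext A
    simp only [Finset.mem_union, Finset.mem_filter]
    constructor
    · rintro ⟨hA, h1, h2⟩
      have : A.card = 1 ∨ A.card = 2 := by omega
      tauto
    · rintro (⟨hA, h1⟩ | ⟨hA, h1⟩) <;> exact ⟨hA, by omega⟩
  have hdisj : Disjoint (s.powerset.filter (fun A => A.card = 1))
      (s.powerset.filter (fun A => A.card = 2)) := by
    rw [Finset.disjoint_left]
    intro A hA hA'
    simp only [Finset.mem_filter] at hA hA'
    omega
  rw [show (∑ A ∈ s.powerset.filter (fun A => 1 ≤ A.card ∧ A.card ≤ 2), f A)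
      = (∑ A ∈ s.powerset.filter (fun A => A.card = 1), f A)
        + (∑ A ∈ s.powerset.filter (fun A => A.card = 2), f A) by
    rw [hsplit, Finset.sum_union hdisj]]
  -- generic bound: the two auxiliary quantities
  have hsq_u : Real.sqrt (c * u) = Real.sqrt (Real.log ρ * u / ρ) := by
    congr 1; rw [hc_def]; ring
  have hsq_v : Real.sqrt (c * v) = Real.sqrt (Real.log ρ * v / ρ) := by
    congr 1; rw [hc_def]; ring
  -- the singleton sum bound
  have hP1 : s.powerset.filter (fun A => A.card = 1) = s.image (fun a => ({a} : Finset (Fin L))) := by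
    ext A
    simp only [Finset.mem_filter, Finset.mem_powerset, Finset.mem_image, Finset.card_eq_one]
    constructor
    · rintro ⟨hAs, a, rfl⟩
      exact ⟨a, hAs (Finset.mem_singleton_self a), rfl⟩
    · rintro ⟨a, ha, rfl⟩
      exact ⟨Finset.singleton_subset_iff.mpr ha, a, rfl⟩
  have hmem_s : ∀ a : Fin L, a ∈ s → a ≠ ℓ₀ := by
    intro a ha
    rw [hs_def] at ha
    exact (Finset.mem_erase.mp ha).1
  -- Jensen bound over s
  have hJ : ∑ a ∈ s, Real.sqrt (c * (r ℓ₀ a)⁻¹) ≤ (L:ℝ) * Real.sqrt (c * u) := by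
    have h1 : ∑ a ∈ s, Real.sqrt (c * (r ℓ₀ a)⁻¹)
        ≤ Real.sqrt ((s.card : ℝ) * ∑ a ∈ s, c * (r ℓ₀ a)⁻¹) := by
      apply sum_sqrt_le_sqrt
      intro a ha
      exact mul_nonneg hc (hinv ℓ₀ a (Ne.symm (hmem_s a ha))).le
    have h2 : ∑ a ∈ s, c * (r ℓ₀ a)⁻¹ = c * (((L:ℝ) - 1) * u) := by
      rw [← Finset.mul_sum, hs_def, hsum_star ℓ₀, ← hu_def]
    have h3 : (s.card : ℝ) * ∑ a ∈ s, c * (r ℓ₀ a)⁻¹ ≤ (L:ℝ)^2 * (c * u) := by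
      rw [h2]
      have hcu : 0 ≤ c * u := mul_nonneg hc hu
      have hsum0 : 0 ≤ c * (((L:ℝ) - 1) * u) := by
        apply mul_nonneg hc (mul_nonneg (by linarith) hu)
      nlinarith [Nat.cast_nonneg (α := ℝ) s.card]
    calc ∑ a ∈ s, Real.sqrt (c * (r ℓ₀ a)⁻¹) ≤ _ := h1
      _ ≤ Real.sqrt ((L:ℝ)^2 * (c * u)) := Real.sqrt_le_sqrt h3
      _ = (L:ℝ) * Real.sqrt (c * u) := by
          rw [Real.sqrt_mul (by positivity), Real.sqrt_sq (by positivity)]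
  -- per-element bound for pairs {ℓ₀, a}
  have hone : ∀ a ∈ s, f {a} ≤ (1/(L:ℝ)) * (X * (r ℓ₀ a)⁻¹ + Real.sqrt (c * (r ℓ₀ a)⁻¹)) := by
    intro a ha
    have ha' := hmem_s a ha
    obtain ⟨hm, hmle⟩ := h_two a ha'
    rw [hf_def]
    simp only [Finset.card_singleton, pow_one]
    have hins : insert ℓ₀ ({a} : Finset (Fin L)) = {ℓ₀, a} := rfl
    rw [hins]
    apply mul_le_mul_of_nonneg_left _ (by positivity)
    have e1 : 1 / (ρ * rS {ℓ₀, a} * ε) + (L:ℝ) / (ρ * rS {ℓ₀, a}) = X * (rS {ℓ₀, a})⁻¹ := by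
      rw [hX_def]; field_simp
    have e2 : Real.log ρ / (ρ * rS {ℓ₀, a}) = c * (rS {ℓ₀, a})⁻¹ := by
      rw [hc_def]; field_simp
    rw [e1, e2]
    have t1 : X * (rS {ℓ₀, a})⁻¹ ≤ X * (r ℓ₀ a)⁻¹ := mul_le_mul_of_nonneg_left hmle hX
    have t2 : Real.sqrt (c * (rS {ℓ₀, a})⁻¹) ≤ Real.sqrt (c * (r ℓ₀ a)⁻¹) :=
      Real.sqrt_le_sqrt (mul_le_mul_of_nonneg_left hmle hc)
    linarith
  have hS1 : (∑ A ∈ s.powerset.filter (fun A => A.card = 1), f A)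
      ≤ X * u + Real.sqrt (c * u) := by
    rw [hP1, Finset.sum_image (fun x _ y _ h => Finset.singleton_inj.mp h)]
    calc ∑ a ∈ s, f {a}
        ≤ ∑ a ∈ s, (1/(L:ℝ)) * (X * (r ℓ₀ a)⁻¹ + Real.sqrt (c * (r ℓ₀ a)⁻¹)) :=
          Finset.sum_le_sum hone
      _ = (1/(L:ℝ)) * (X * (((L:ℝ)-1) * u) + ∑ a ∈ s, Real.sqrt (c * (r ℓ₀ a)⁻¹)) := by
          rw [← Finset.mul_sum, Finset.sum_add_distrib, ← Finset.mul_sum, hs_def, hsum_star ℓ₀,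
            ← hu_def]
      _ ≤ (1/(L:ℝ)) * (X * ((L:ℝ) * u) + (L:ℝ) * Real.sqrt (c * u)) := by
          apply mul_le_mul_of_nonneg_left _ (by positivity)
          have : X * (((L:ℝ)-1) * u) ≤ X * ((L:ℝ) * u) := by
            apply mul_le_mul_of_nonneg_left _ hX
            nlinarith
          exact add_le_add this hJ
      _ = X * u + Real.sqrt (c * u) := by
          have hLne : (L:ℝ) ≠ 0 := ne_of_gt hLpos
          field_simp
  -- now the pair sum
  set g : Fin L × Fin L → ℝ := fun p =>
    (1/(L:ℝ)^2) * (X * ((r ℓ₀ p.1)⁻¹ + (r ℓ₀ p.2)⁻¹ + (r p.1 p.2)⁻¹)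
      + (Real.sqrt (c * (r ℓ₀ p.1)⁻¹) + Real.sqrt (c * (r ℓ₀ p.2)⁻¹)
        + Real.sqrt (c * (r p.1 p.2)⁻¹))) with hg_def
  set e : Finset (Fin L) → Fin L × Fin L := fun A =>
    if h : A.Nonempty then (A.min' h, A.max' h) else (ℓ₀, ℓ₀) with he_def
  set P2 := s.powerset.filter (fun A => A.card = 2) with hP2_def
  have hkey : ∀ A ∈ P2, ∃ h : A.Nonempty,
      A.min' h ∈ s ∧ A.max' h ∈ s ∧ A.min' h ≠ A.max' h ∧ A = {A.min' h, A.max' h} := by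
    intro A hA
    simp only [hP2_def, Finset.mem_filter, Finset.mem_powerset] at hA
    obtain ⟨hAs, hc2⟩ := hA
    have hne : A.Nonempty := Finset.card_pos.mp (by omega)
    refine ⟨hne, ?_⟩
    have hmm : A.min' hne ∈ A := Finset.min'_mem A hne
    have hMM : A.max' hne ∈ A := Finset.max'_mem A hne
    have hlt : A.min' hne < A.max' hne := Finset.min'_lt_max'_of_card A (by omega)
    have hsub : ({A.min' hne, A.max' hne} : Finset (Fin L)) ⊆ A := by
      intro x hx
      simp only [Finset.mem_insert, Finset.mem_singleton] at hx
      rcases hx with rfl | rfl <;> assumption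
    have hEq : ({A.min' hne, A.max' hne} : Finset (Fin L)) = A :=
      Finset.eq_of_subset_of_card_le hsub (by rw [Finset.card_pair (ne_of_lt hlt)]; omega)
    exact ⟨hAs hmm, hAs hMM, ne_of_lt hlt, hEq.symm⟩
  have heA : ∀ (A : Finset (Fin L)) (h : A.Nonempty), e A = (A.min' h, A.max' h) := by
    intro A h
    rw [he_def]
    simp [h]
  have hfg : ∀ A ∈ P2, f A ≤ g (e A) := by
    intro A hA
    obtain ⟨hne, ha_s, hb_s, hab, hAeq⟩ := hkey A hA
    have hcardA : A.card = 2 := by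
      simp only [hP2_def, Finset.mem_filter] at hA; exact hA.2
    rw [heA A hne]
    set a := A.min' hne
    set b := A.max' hne
    have hins : insert ℓ₀ A = {ℓ₀, a, b} := by rw [hAeq]
    obtain ⟨hpos, hle⟩ := h_three a b (hmem_s a ha_s) (hmem_s b hb_s) hab
    rw [hf_def]
    simp only [hcardA]
    rw [hins, hg_def]
    apply mul_le_mul_of_nonneg_left _ (by positivity)
    have e1 : 1 / (ρ * rS {ℓ₀, a, b} * ε) + (L:ℝ) / (ρ * rS {ℓ₀, a, b})
        = X * (rS {ℓ₀, a, b})⁻¹ := by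
      rw [hX_def]; field_simp
    have e2 : Real.log ρ / (ρ * rS {ℓ₀, a, b}) = c * (rS {ℓ₀, a, b})⁻¹ := by
      rw [hc_def]; field_simp
    rw [e1, e2]
    have i1 := (hinv ℓ₀ a (Ne.symm (hmem_s a ha_s))).le
    have i2 := (hinv ℓ₀ b (Ne.symm (hmem_s b hb_s))).le
    have i3 := (hinv a b hab).le
    have t1 : X * (rS {ℓ₀, a, b})⁻¹ ≤ X * ((r ℓ₀ a)⁻¹ + (r ℓ₀ b)⁻¹ + (r a b)⁻¹) :=
      mul_le_mul_of_nonneg_left hle hX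
    have t2 : Real.sqrt (c * (rS {ℓ₀, a, b})⁻¹)
        ≤ Real.sqrt (c * (r ℓ₀ a)⁻¹) + Real.sqrt (c * (r ℓ₀ b)⁻¹)
          + Real.sqrt (c * (r a b)⁻¹) := by
      have s1 : Real.sqrt (c * (rS {ℓ₀, a, b})⁻¹)
          ≤ Real.sqrt (c * (r ℓ₀ a)⁻¹ + (c * (r ℓ₀ b)⁻¹ + c * (r a b)⁻¹)) := by
        apply Real.sqrt_le_sqrt
        have : c * ((r ℓ₀ a)⁻¹ + (r ℓ₀ b)⁻¹ + (r a b)⁻¹)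
            = c * (r ℓ₀ a)⁻¹ + (c * (r ℓ₀ b)⁻¹ + c * (r a b)⁻¹) := by ring
        rw [← this]
        exact mul_le_mul_of_nonneg_left hle hc
      have s2 : Real.sqrt (c * (r ℓ₀ a)⁻¹ + (c * (r ℓ₀ b)⁻¹ + c * (r a b)⁻¹))
          ≤ Real.sqrt (c * (r ℓ₀ a)⁻¹) + Real.sqrt (c * (r ℓ₀ b)⁻¹ + c * (r a b)⁻¹) :=
        sqrt_add_le3 (mul_nonneg hc i1) (add_nonneg (mul_nonneg hc i2) (mul_nonneg hc i3))
      have s3 : Real.sqrt (c * (r ℓ₀ b)⁻¹ + c * (r a b)⁻¹)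
          ≤ Real.sqrt (c * (r ℓ₀ b)⁻¹) + Real.sqrt (c * (r a b)⁻¹) :=
        sqrt_add_le3 (mul_nonneg hc i2) (mul_nonneg hc i3)
      linarith
    linarith
  -- offDiag component bounds
  have hTA : ∑ p ∈ s.offDiag, (r ℓ₀ p.1)⁻¹ ≤ (L:ℝ)^2 * u := by
    rw [sum_offDiag_eq s (fun a b => (r ℓ₀ a)⁻¹)]
    have step : ∀ a ∈ s, ∑ _b ∈ s.erase a, (r ℓ₀ a)⁻¹ ≤ (L:ℝ) * (r ℓ₀ a)⁻¹ := by
      intro a ha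
      rw [Finset.sum_const, nsmul_eq_mul]
      apply mul_le_mul_of_nonneg_right _ (hinv ℓ₀ a (Ne.symm (hmem_s a ha))).le
      calc ((s.erase a).card : ℝ) ≤ (s.card : ℝ) := by
            exact_mod_cast Finset.card_le_card (Finset.erase_subset a s)
        _ ≤ (L:ℝ) := hscardR
    calc ∑ a ∈ s, ∑ _b ∈ s.erase a, (r ℓ₀ a)⁻¹ ≤ ∑ a ∈ s, (L:ℝ) * (r ℓ₀ a)⁻¹ :=
          Finset.sum_le_sum step
      _ = (L:ℝ) * (((L:ℝ) - 1) * u) := by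
          rw [← Finset.mul_sum, hs_def, hsum_star ℓ₀, ← hu_def]
      _ ≤ (L:ℝ)^2 * u := by nlinarith
  have hTB : ∑ p ∈ s.offDiag, (r ℓ₀ p.2)⁻¹ ≤ (L:ℝ)^2 * u := by
    rw [sum_offDiag_eq s (fun a b => (r ℓ₀ b)⁻¹)]
    have step : ∀ a ∈ s, ∑ b ∈ s.erase a, (r ℓ₀ b)⁻¹ ≤ ((L:ℝ) - 1) * u := by
      intro a _
      calc ∑ b ∈ s.erase a, (r ℓ₀ b)⁻¹ ≤ ∑ b ∈ s, (r ℓ₀ b)⁻¹ :=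
            Finset.sum_le_sum_of_subset_of_nonneg (Finset.erase_subset a s)
              (fun b hb _ => (hinv ℓ₀ b (Ne.symm (hmem_s b hb))).le)
        _ = ((L:ℝ) - 1) * u := by rw [hs_def, hsum_star ℓ₀, ← hu_def]
    calc ∑ a ∈ s, ∑ b ∈ s.erase a, (r ℓ₀ b)⁻¹ ≤ ∑ _a ∈ s, ((L:ℝ) - 1) * u :=
          Finset.sum_le_sum step
      _ = (s.card : ℝ) * (((L:ℝ) - 1) * u) := by rw [Finset.sum_const, nsmul_eq_mul]
      _ ≤ (L:ℝ)^2 * u := by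
          nlinarith [hscardR, mul_nonneg (by linarith : (0:ℝ) ≤ (L:ℝ)-1) hu,
            Nat.cast_nonneg (α := ℝ) s.card]
  have hTCeq : ∑ p ∈ (univ : Finset (Fin L)).offDiag, (r p.1 p.2)⁻¹ = ((L:ℝ) - 1) * ((L:ℝ) * v) := by
    rw [sum_offDiag_eq univ (fun a b => (r a b)⁻¹)]
    calc ∑ a : Fin L, ∑ b ∈ univ.erase a, (r a b)⁻¹
        = ∑ a : Fin L, ((L:ℝ) - 1) * rstarInv r a := by
          exact Finset.sum_congr rfl fun a _ => hsum_star a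
      _ = ((L:ℝ) - 1) * ((L:ℝ) * v) := by rw [← Finset.mul_sum, hsum_ss]
  have hoffsub : s.offDiag ⊆ (univ : Finset (Fin L)).offDiag := by
    intro p hp
    rw [Finset.mem_offDiag] at hp ⊢
    exact ⟨Finset.mem_univ _, Finset.mem_univ _, hp.2.2⟩
  have hTC : ∑ p ∈ s.offDiag, (r p.1 p.2)⁻¹ ≤ (L:ℝ)^2 * v := by
    calc ∑ p ∈ s.offDiag, (r p.1 p.2)⁻¹ ≤ ∑ p ∈ (univ : Finset (Fin L)).offDiag, (r p.1 p.2)⁻¹ :=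
          Finset.sum_le_sum_of_subset_of_nonneg hoffsub
            (fun p hp _ => (hinv p.1 p.2 (Finset.mem_offDiag.mp hp).2.2).le)
      _ = ((L:ℝ) - 1) * ((L:ℝ) * v) := hTCeq
      _ ≤ (L:ℝ)^2 * v := by nlinarith
  have hTD : ∑ p ∈ s.offDiag, Real.sqrt (c * (r ℓ₀ p.1)⁻¹) ≤ (L:ℝ)^2 * Real.sqrt (c * u) := by
    rw [sum_offDiag_eq s (fun a b => Real.sqrt (c * (r ℓ₀ a)⁻¹))]
    have step : ∀ a ∈ s, ∑ _b ∈ s.erase a, Real.sqrt (c * (r ℓ₀ a)⁻¹)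
        ≤ (L:ℝ) * Real.sqrt (c * (r ℓ₀ a)⁻¹) := by
      intro a _
      rw [Finset.sum_const, nsmul_eq_mul]
      apply mul_le_mul_of_nonneg_right _ (Real.sqrt_nonneg _)
      calc ((s.erase a).card : ℝ) ≤ (s.card : ℝ) := by
            exact_mod_cast Finset.card_le_card (Finset.erase_subset a s)
        _ ≤ (L:ℝ) := hscardR
    calc ∑ a ∈ s, ∑ _b ∈ s.erase a, Real.sqrt (c * (r ℓ₀ a)⁻¹)
        ≤ ∑ a ∈ s, (L:ℝ) * Real.sqrt (c * (r ℓ₀ a)⁻¹) := Finset.sum_le_sum step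
      _ = (L:ℝ) * ∑ a ∈ s, Real.sqrt (c * (r ℓ₀ a)⁻¹) := by rw [← Finset.mul_sum]
      _ ≤ (L:ℝ) * ((L:ℝ) * Real.sqrt (c * u)) := mul_le_mul_of_nonneg_left hJ (by positivity)
      _ = (L:ℝ)^2 * Real.sqrt (c * u) := by ring
  have hTE : ∑ p ∈ s.offDiag, Real.sqrt (c * (r ℓ₀ p.2)⁻¹) ≤ (L:ℝ)^2 * Real.sqrt (c * u) := by
    rw [sum_offDiag_eq s (fun a b => Real.sqrt (c * (r ℓ₀ b)⁻¹))]
    have step : ∀ a ∈ s, ∑ b ∈ s.erase a, Real.sqrt (c * (r ℓ₀ b)⁻¹)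
        ≤ (L:ℝ) * Real.sqrt (c * u) := by
      intro a _
      calc ∑ b ∈ s.erase a, Real.sqrt (c * (r ℓ₀ b)⁻¹)
          ≤ ∑ b ∈ s, Real.sqrt (c * (r ℓ₀ b)⁻¹) :=
            Finset.sum_le_sum_of_subset_of_nonneg (Finset.erase_subset a s)
              (fun b _ _ => Real.sqrt_nonneg _)
        _ ≤ (L:ℝ) * Real.sqrt (c * u) := hJ
    calc ∑ a ∈ s, ∑ b ∈ s.erase a, Real.sqrt (c * (r ℓ₀ b)⁻¹)
        ≤ ∑ _a ∈ s, (L:ℝ) * Real.sqrt (c * u) := Finset.sum_le_sum step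
      _ = (s.card : ℝ) * ((L:ℝ) * Real.sqrt (c * u)) := by rw [Finset.sum_const, nsmul_eq_mul]
      _ ≤ (L:ℝ)^2 * Real.sqrt (c * u) := by
          nlinarith [hscardR, Nat.cast_nonneg (α := ℝ) s.card, Real.sqrt_nonneg (c * u),
            mul_nonneg hLpos.le (Real.sqrt_nonneg (c*u))]
  have hTF : ∑ p ∈ s.offDiag, Real.sqrt (c * (r p.1 p.2)⁻¹) ≤ (L:ℝ)^2 * Real.sqrt (c * v) := by
    have hcardT : (((univ : Finset (Fin L)).offDiag.card : ℝ)) ≤ (L:ℝ)^2 := by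
      have : (univ : Finset (Fin L)).offDiag.card ≤ L * L := by
        rw [Finset.offDiag_card, Finset.card_univ, Fintype.card_fin]
        omega
      calc (((univ : Finset (Fin L)).offDiag.card : ℝ)) ≤ ((L * L : ℕ) : ℝ) := by
            exact_mod_cast this
        _ = (L:ℝ)^2 := by push_cast; ring
    calc ∑ p ∈ s.offDiag, Real.sqrt (c * (r p.1 p.2)⁻¹)
        ≤ ∑ p ∈ (univ : Finset (Fin L)).offDiag, Real.sqrt (c * (r p.1 p.2)⁻¹) :=
          Finset.sum_le_sum_of_subset_of_nonneg hoffsub (fun p _ _ => Real.sqrt_nonneg _)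
      _ ≤ Real.sqrt ((((univ : Finset (Fin L)).offDiag.card : ℝ))
            * ∑ p ∈ (univ : Finset (Fin L)).offDiag, c * (r p.1 p.2)⁻¹) := by
          apply sum_sqrt_le_sqrt
          intro p hp
          exact mul_nonneg hc (hinv p.1 p.2 (Finset.mem_offDiag.mp hp).2.2).le
      _ ≤ Real.sqrt (((L:ℝ)^2)^2 * (c * v)) := by
          apply Real.sqrt_le_sqrt
          have hsum_eq : ∑ p ∈ (univ : Finset (Fin L)).offDiag, c * (r p.1 p.2)⁻¹
              = c * (((L:ℝ) - 1) * ((L:ℝ) * v)) := by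
            rw [← Finset.mul_sum, hTCeq]
          rw [hsum_eq]
          have h1 : 0 ≤ c * (((L:ℝ) - 1) * ((L:ℝ) * v)) := by
            apply mul_nonneg hc
            apply mul_nonneg (by linarith)
            exact mul_nonneg (by linarith) hv
          have h2 : c * (((L:ℝ) - 1) * ((L:ℝ) * v)) ≤ (L:ℝ)^2 * (c * v) := by
            nlinarith [mul_nonneg hc hv]
          nlinarith [Nat.cast_nonneg (α := ℝ) (univ : Finset (Fin L)).offDiag.card]
      _ = (L:ℝ)^2 * Real.sqrt (c * v) := by
          rw [Real.sqrt_mul (by positivity), Real.sqrt_sq (by positivity)]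
  -- assemble pair sum
  have hS2 : (∑ A ∈ P2, f A) ≤ X * (2*u + v) + (2*Real.sqrt (c*u) + Real.sqrt (c*v)) := by
    have hinj : ∀ x ∈ P2, ∀ y ∈ P2, e x = e y → x = y := by
      intro x hx y hy hxy
      obtain ⟨hnex, _, _, _, hxeq⟩ := hkey x hx
      obtain ⟨hney, _, _, _, hyeq⟩ := hkey y hy
      rw [heA x hnex, heA y hney, Prod.mk.injEq] at hxy
      rw [hxeq, hyeq, hxy.1, hxy.2]
    have hsubset : P2.image e ⊆ s.offDiag := by
      intro p hp
      obtain ⟨A, hA, rfl⟩ := Finset.mem_image.mp hp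
      obtain ⟨hne, h1', h2', h3', _⟩ := hkey A hA
      rw [heA A hne, Finset.mem_offDiag]
      exact ⟨h1', h2', h3'⟩
    have hgnn : ∀ p ∈ s.offDiag, 0 ≤ g p := by
      intro p hp
      obtain ⟨hp1, hp2, hp12⟩ := Finset.mem_offDiag.mp hp
      rw [hg_def]
      have i1 := (hinv ℓ₀ p.1 (Ne.symm (hmem_s _ hp1))).le
      have i2 := (hinv ℓ₀ p.2 (Ne.symm (hmem_s _ hp2))).le
      have i3 := (hinv p.1 p.2 hp12).le
      apply mul_nonneg (by positivity)
      apply add_nonneg (mul_nonneg hX (by linarith))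
      positivity
    calc (∑ A ∈ P2, f A) ≤ ∑ A ∈ P2, g (e A) := Finset.sum_le_sum hfg
      _ = ∑ p ∈ P2.image e, g p := (Finset.sum_image hinj).symm
      _ ≤ ∑ p ∈ s.offDiag, g p :=
          Finset.sum_le_sum_of_subset_of_nonneg hsubset (fun p hp _ => hgnn p hp)
      _ = (1/(L:ℝ)^2) * (X * ((∑ p ∈ s.offDiag, (r ℓ₀ p.1)⁻¹)
            + (∑ p ∈ s.offDiag, (r ℓ₀ p.2)⁻¹) + (∑ p ∈ s.offDiag, (r p.1 p.2)⁻¹))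
          + ((∑ p ∈ s.offDiag, Real.sqrt (c * (r ℓ₀ p.1)⁻¹))
            + (∑ p ∈ s.offDiag, Real.sqrt (c * (r ℓ₀ p.2)⁻¹))
            + (∑ p ∈ s.offDiag, Real.sqrt (c * (r p.1 p.2)⁻¹)))) := by
          rw [hg_def]
          simp only [Finset.sum_add_distrib, ← Finset.mul_sum]
      _ ≤ (1/(L:ℝ)^2) * (X * ((L:ℝ)^2 * u + (L:ℝ)^2 * u + (L:ℝ)^2 * v)
          + ((L:ℝ)^2 * Real.sqrt (c*u) + (L:ℝ)^2 * Real.sqrt (c*u)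
            + (L:ℝ)^2 * Real.sqrt (c*v))) := by
          apply mul_le_mul_of_nonneg_left _ (by positivity)
          have hXs : X * ((∑ p ∈ s.offDiag, (r ℓ₀ p.1)⁻¹)
              + (∑ p ∈ s.offDiag, (r ℓ₀ p.2)⁻¹) + (∑ p ∈ s.offDiag, (r p.1 p.2)⁻¹))
              ≤ X * ((L:ℝ)^2 * u + (L:ℝ)^2 * u + (L:ℝ)^2 * v) := by
            apply mul_le_mul_of_nonneg_left _ hX
            linarith
          linarith
      _ = X * (2*u + v) + (2*Real.sqrt (c*u) + Real.sqrt (c*v)) := by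
          have hL2ne : ((L:ℝ)^2) ≠ 0 := by positivity
          field_simp
          ring
  rw [← hsq_u, ← hsq_v]
  nlinarith [mul_nonneg hX hv, Real.sqrt_nonneg (c * v), hS1, hS2]
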